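/- Let g = g₅,₄ be the 5-dimensional complex nilpotent Lie algebra with basis x₁,…,x₅ and nonzero brackets [x₁,x₂] = x₃, [x₁,x₃] = x₄, [x₂,x₃] = x₅ (and anticommutativity). Then dim H²(g,ℂ) = 3, dim ZL²(g,ℂ) = 10, dim HL²(g,ℂ) = 7, and g is not trivial ZL²-uncoupling: the invariant symmetric bilinear form B = ω¹⊙ω⁵ − ω²⊙ω⁴ + ω³⊗ω³ (where (ωⁱ) is the dual basis and ω⊙π = ω⊗π + π⊗ω) satisfies I_B ≠ 0 and I_B ∈ B³(g,ℂ), so that Im I ∩ B³(g,ℂ) ≠ {0}. -/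

import Mathlib

noncomputable section

open Module

variable (L : Type*) [LieRing L] [LieAlgebra ℂ L]

/-- The trivial Leibniz coboundary, as a linear map on the space of all ℂ-valued
2-cochains. -/
def leibnizDC : (L → L → ℂ) →ₗ[ℂ] (L → L → L → ℂ) where
  toFun ψ := fun X Y Z => -ψ ⁅X, Y⁆ Z + ψ X ⁅Y, Z⁆ + ψ ⁅X, Z⁆ Y
  map_add' a b := by
    funext X Y Z
    simp only [Pi.add_apply, neg_add]
    ring
  map_smul' c a := by
    funext X Y Z
    simp only [Pi.smul_apply, RingHom.id_apply, smul_eq_mul]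
    ring

/-- The subspace of bilinear forms among all ℂ-valued 2-cochains. -/
def BilC : Submodule ℂ (L → L → ℂ) where
  carrier := {ψ | ∃ Ψ : L →ₗ[ℂ] L →ₗ[ℂ] ℂ, ∀ X Y : L, ψ X Y = Ψ X Y}
  add_mem' := by
    rintro a b ⟨A, hA⟩ ⟨B, hB⟩
    exact ⟨A + B, fun X Y => by simp [hA X Y, hB X Y]⟩
  zero_mem' := ⟨0, by simp⟩
  smul_mem' := by
    rintro c a ⟨A, hA⟩
    exact ⟨c • A, fun X Y => by simp [hA X Y]⟩

/-- Alternating ℂ-valued 2-cochains. -/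
def AltC : Submodule ℂ (L → L → ℂ) where
  carrier := {ψ | ∀ X Y : L, ψ X Y = - ψ Y X}
  add_mem' := by
    intro a b ha hb X Y
    simp only [Pi.add_apply, ha X Y, hb X Y, neg_add]
  zero_mem' := by simp
  smul_mem' := by
    intro c a ha X Y
    simp only [Pi.smul_apply, ha X Y, smul_neg]

/-- Symmetric ℂ-valued 2-cochains. -/
def SymmC : Submodule ℂ (L → L → ℂ) where
  carrier := {ψ | ∀ X Y : L, ψ X Y = ψ Y X}
  add_mem' := by
    intro a b ha hb X Y
    simp only [Pi.add_apply, ha X Y, hb X Y]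
  zero_mem' := by simp
  smul_mem' := by
    intro c a ha X Y
    simp only [Pi.smul_apply, ha X Y]

/-- Trivial Leibniz 2-cocycles: bilinear forms with vanishing trivial Leibniz coboundary. -/
def ZL2C : Submodule ℂ (L → L → ℂ) := BilC L ⊓ LinearMap.ker (leibnizDC L)

/-- Chevalley–Eilenberg (alternating) 2-cocycles with trivial coefficients. -/
def Z2C : Submodule ℂ (L → L → ℂ) := ZL2C L ⊓ AltC L

/-- Symmetric trivial Leibniz 2-cocycles. -/
def ZL20C : Submodule ℂ (L → L → ℂ) := ZL2C L ⊓ SymmC L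

/-- 2-coboundaries with trivial coefficients. -/
def B2C : Submodule ℂ (L → L → ℂ) where
  carrier := {ψ | ∃ f : L →ₗ[ℂ] ℂ, ∀ X Y : L, ψ X Y = - f ⁅X, Y⁆}
  add_mem' := by
    rintro a b ⟨f₁, h₁⟩ ⟨f₂, h₂⟩
    refine ⟨f₁ + f₂, fun X Y => ?_⟩
    simp only [Pi.add_apply, h₁ X Y, h₂ X Y, LinearMap.add_apply, neg_add]
  zero_mem' := ⟨0, by simp⟩
  smul_mem' := by
    rintro c a ⟨f, h⟩
    refine ⟨c • f, fun X Y => ?_⟩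
    simp only [Pi.smul_apply, h X Y, LinearMap.smul_apply, smul_neg]

/-- Chevalley–Eilenberg 3-coboundaries with trivial coefficients: trivial Leibniz
coboundaries of alternating bilinear 2-cochains (on which the Leibniz and
Chevalley–Eilenberg differentials coincide). -/
def B3C : Submodule ℂ (L → L → L → ℂ) := (BilC L ⊓ AltC L).map (leibnizDC L)

/-- The image `Im I` of the Koszul map: the space of trilinear forms spanned by
`(X,Y,Z) ↦ B([X,Y],Z)` with `B` an invariant symmetric bilinear form. -/
def ImIC : Submodule ℂ (L → L → L → ℂ) :=
  Submodule.span ℂ {T | ∃ B : L →ₗ[ℂ] L →ₗ[ℂ] ℂ,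
    (∀ X Y : L, B X Y = B Y X) ∧ (∀ X Y Z : L, B ⁅Z, X⁆ Y = - B X ⁅Z, Y⁆) ∧
    T = fun X Y Z => B ⁅X, Y⁆ Z}

/-- The kernel `ker I` of the Koszul map: invariant symmetric bilinear forms vanishing on
brackets. -/
def KerIC : Submodule ℂ (L → L → ℂ) where
  carrier := {ψ | ψ ∈ BilC L ∧ (∀ X Y : L, ψ X Y = ψ Y X) ∧
    (∀ X Y Z : L, ψ ⁅Z, X⁆ Y = - ψ X ⁅Z, Y⁆) ∧ (∀ X Y Z : L, ψ ⁅X, Y⁆ Z = 0)}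
  add_mem' := by
    rintro a b ⟨ha0, ha1, ha3, ha4⟩ ⟨hb0, hb1, hb3, hb4⟩
    refine ⟨add_mem ha0 hb0, fun X Y => ?_, fun X Y Z => ?_, fun X Y Z => ?_⟩
    · simp only [Pi.add_apply, ha1 X Y, hb1 X Y]
    · simp only [Pi.add_apply, ha3 X Y Z, hb3 X Y Z, neg_add]
    · simp only [Pi.add_apply, ha4 X Y Z, hb4 X Y Z, add_zero]
  zero_mem' := ⟨zero_mem _, fun X Y => rfl, fun X Y Z => by simp, fun X Y Z => rfl⟩
  smul_mem' := by
    rintro c a ⟨h0, h1, h3, h4⟩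
    refine ⟨Submodule.smul_mem _ _ h0, fun X Y => ?_, fun X Y Z => ?_, fun X Y Z => ?_⟩
    · simp only [Pi.smul_apply, h1 X Y]
    · simp only [Pi.smul_apply, h3 X Y Z, smul_neg]
    · simp only [Pi.smul_apply, h4 X Y Z, smul_zero]

variable {L}

/-- Assumption on the bracket of `g₅,₄`. -/
def HBR (x : Basis (Fin 5) ℂ L) : Prop := ∀ i j : Fin 5, ⁅x i, x j⁆ =
      if i = 0 ∧ j = 1 then x 2 else if i = 1 ∧ j = 0 then -x 2
      else if i = 0 ∧ j = 2 then x 3 else if i = 2 ∧ j = 0 then -x 3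
      else if i = 1 ∧ j = 2 then x 4 else if i = 2 ∧ j = 1 then -x 4
      else 0

lemma lie_eq {x : Basis (Fin 5) ℂ L} (hbr : HBR x) (X Y : L) :
    ⁅X, Y⁆ = (x.coord 0 X * x.coord 1 Y - x.coord 1 X * x.coord 0 Y) • x 2
      + (x.coord 0 X * x.coord 2 Y - x.coord 2 X * x.coord 0 Y) • x 3
      + (x.coord 1 X * x.coord 2 Y - x.coord 2 X * x.coord 1 Y) • x 4 := by
  unfold HBR at hbr
  conv_lhs => rw [← x.sum_repr X, ← x.sum_repr Y]
  rw [Fin.sum_univ_five, Fin.sum_univ_five]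
  simp only [add_lie, lie_add, smul_lie, lie_smul, hbr, Fin.reduceEq, and_true, true_and,
    and_false, false_and, if_true, if_false, and_self, Basis.coord_apply, ite_true, ite_false]
  module

lemma coord_lie_0 {x : Basis (Fin 5) ℂ L} (hbr : HBR x) (X Y : L) :
    x.coord 0 ⁅X, Y⁆ = 0 := by
  rw [lie_eq hbr X Y]
  simp [Basis.coord_apply, Basis.repr_self, Finsupp.single_apply]

lemma coord_lie_1 {x : Basis (Fin 5) ℂ L} (hbr : HBR x) (X Y : L) :
    x.coord 1 ⁅X, Y⁆ = 0 := by
  rw [lie_eq hbr X Y]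
  simp [Basis.coord_apply, Basis.repr_self, Finsupp.single_apply]

lemma coord_lie_2 {x : Basis (Fin 5) ℂ L} (hbr : HBR x) (X Y : L) :
    x.coord 2 ⁅X, Y⁆ = x.coord 0 X * x.coord 1 Y - x.coord 1 X * x.coord 0 Y := by
  rw [lie_eq hbr X Y]
  simp [Basis.coord_apply, Basis.repr_self, Finsupp.single_apply]

lemma coord_lie_3 {x : Basis (Fin 5) ℂ L} (hbr : HBR x) (X Y : L) :
    x.coord 3 ⁅X, Y⁆ = x.coord 0 X * x.coord 2 Y - x.coord 2 X * x.coord 0 Y := by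
  rw [lie_eq hbr X Y]
  simp [Basis.coord_apply, Basis.repr_self, Finsupp.single_apply]

lemma coord_lie_4 {x : Basis (Fin 5) ℂ L} (hbr : HBR x) (X Y : L) :
    x.coord 4 ⁅X, Y⁆ = x.coord 1 X * x.coord 2 Y - x.coord 2 X * x.coord 1 Y := by
  rw [lie_eq hbr X Y]
  simp [Basis.coord_apply, Basis.repr_self, Finsupp.single_apply]

/-- bilinear building block -/
noncomputable def cc (x : Basis (Fin 5) ℂ L) (i j : Fin 5) : L →ₗ[ℂ] L →ₗ[ℂ] ℂ :=
  (x.coord i).smulRight (x.coord j)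

lemma cc_apply (x : Basis (Fin 5) ℂ L) (i j : Fin 5) (X Y : L) :
    cc x i j X Y = x.coord i X * x.coord j Y := by
  simp [cc]

/-- bilinear form from coefficient matrix, as a raw function -/
noncomputable def gf (x : Basis (Fin 5) ℂ L) (M : Fin 5 → Fin 5 → ℂ) : L → L → ℂ :=
  fun X Y => ∑ i, ∑ j, M i j * (x.coord i X * x.coord j Y)

/-- bilinear form from coefficient matrix, as a bilinear map -/
noncomputable def gW (x : Basis (Fin 5) ℂ L) (M : Fin 5 → Fin 5 → ℂ) :
    L →ₗ[ℂ] L →ₗ[ℂ] ℂ :=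
  ∑ i, ∑ j, M i j • cc x i j

lemma gf_eq (x : Basis (Fin 5) ℂ L) (M : Fin 5 → Fin 5 → ℂ) (X Y : L) :
    gf x M X Y = gW x M X Y := by
  simp [gf, gW, cc, LinearMap.sum_apply, Finset.sum_apply, mul_assoc]

lemma gf_mem_BilC (x : Basis (Fin 5) ℂ L) (M : Fin 5 → Fin 5 → ℂ) :
    gf x M ∈ BilC L := ⟨gW x M, gf_eq x M⟩

lemma gf_basis (x : Basis (Fin 5) ℂ L) (M : Fin 5 → Fin 5 → ℂ) (a b : Fin 5) :
    gf x M (x a) (x b) = M a b := by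
  simp [gf, Basis.coord_apply, Basis.repr_self, Finsupp.single_apply, mul_ite, ite_mul,
    Finset.sum_ite_eq, Finset.sum_ite_eq']

/-- expansion of a bilinear map in basis coordinates -/
lemma bil_expand (x : Basis (Fin 5) ℂ L) (Ψ : L →ₗ[ℂ] L →ₗ[ℂ] ℂ) (X Y : L) :
    Ψ X Y = ∑ i, ∑ j, x.coord i X * x.coord j Y * Ψ (x i) (x j) := by
  conv_lhs => rw [← x.sum_repr X, ← x.sum_repr Y]
  simp only [map_sum, LinearMap.sum_apply, map_smul, LinearMap.smul_apply, smul_eq_mul,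
    Basis.coord_apply]
  rw [Finset.sum_comm]
  refine Finset.sum_congr rfl fun i _ => ?_
  rw [Finset.mul_sum]
  refine Finset.sum_congr rfl fun j _ => by ring
section VecLemmas
open Matrix
variable {α : Type*} {m : ℕ}
@[simp] lemma cons_val_five (x : α) (u : Fin m.succ.succ.succ.succ.succ → α) :
    vecCons x u 5 = vecHead (vecTail (vecTail (vecTail (vecTail u)))) := rfl
@[simp] lemma cons_val_six (x : α) (u : Fin m.succ.succ.succ.succ.succ.succ → α) :
    vecCons x u 6 = vecHead (vecTail (vecTail (vecTail (vecTail (vecTail u))))) := rfl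
@[simp] lemma cons_val_seven (x : α) (u : Fin m.succ.succ.succ.succ.succ.succ.succ → α) :
    vecCons x u 7 = vecHead (vecTail (vecTail (vecTail (vecTail (vecTail (vecTail u)))))) := rfl
@[simp] lemma cons_val_eight (x : α) (u : Fin m.succ.succ.succ.succ.succ.succ.succ.succ → α) :
    vecCons x u 8 = vecHead (vecTail (vecTail (vecTail (vecTail (vecTail (vecTail (vecTail u))))))) := rfl
@[simp] lemma cons_val_nine (x : α) (u : Fin m.succ.succ.succ.succ.succ.succ.succ.succ.succ → α) :
    vecCons x u 9 = vecHead (vecTail (vecTail (vecTail (vecTail (vecTail (vecTail (vecTail (vecTail u)))))))) := rfl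
end VecLemmas

noncomputable def Mg : Fin 10 → Fin 5 → Fin 5 → ℂ
  | ⟨0, _⟩ => ![![1, 0, 0, 0, 0], ![0, 0, 0, 0, 0], ![0, 0, 0, 0, 0], ![0, 0, 0, 0, 0], ![0, 0, 0, 0, 0]]
  | ⟨1, _⟩ => ![![0, 1, 0, 0, 0], ![0, 0, 0, 0, 0], ![0, 0, 0, 0, 0], ![0, 0, 0, 0, 0], ![0, 0, 0, 0, 0]]
  | ⟨2, _⟩ => ![![0, 0, 0, 0, 0], ![1, 0, 0, 0, 0], ![0, 0, 0, 0, 0], ![0, 0, 0, 0, 0], ![0, 0, 0, 0, 0]]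
  | ⟨3, _⟩ => ![![0, 0, 0, 0, 0], ![0, 1, 0, 0, 0], ![0, 0, 0, 0, 0], ![0, 0, 0, 0, 0], ![0, 0, 0, 0, 0]]
  | ⟨4, _⟩ => ![![0, 0, (-1), 0, 0], ![0, 0, 0, 0, 0], ![1, 0, 0, 0, 0], ![0, 0, 0, 0, 0], ![0, 0, 0, 0, 0]]
  | ⟨5, _⟩ => ![![0, 0, 0, 0, 0], ![0, 0, (-1), 0, 0], ![0, 1, 0, 0, 0], ![0, 0, 0, 0, 0], ![0, 0, 0, 0, 0]]
  | ⟨6, _⟩ => ![![0, 0, 0, (-1), 0], ![0, 0, 0, 0, 0], ![0, 0, 0, 0, 0], ![1, 0, 0, 0, 0], ![0, 0, 0, 0, 0]]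
  | ⟨7, _⟩ => ![![0, 0, 0, 0, (-2)], ![0, 0, 0, 1, 0], ![0, 0, (-1), 0, 0], ![0, 1, 0, 0, 0], ![0, 0, 0, 0, 0]]
  | ⟨8, _⟩ => ![![0, 0, 0, 0, 1], ![0, 0, 0, (-2), 0], ![0, 0, 1, 0, 0], ![0, 0, 0, 0, 0], ![1, 0, 0, 0, 0]]
  | ⟨9, _⟩ => ![![0, 0, 0, 0, 0], ![0, 0, 0, 0, (-1)], ![0, 0, 0, 0, 0], ![0, 0, 0, 0, 0], ![0, 1, 0, 0, 0]]
  | ⟨n+10, h⟩ => absurd h (by omega)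

noncomputable def Mh : Fin 6 → Fin 5 → Fin 5 → ℂ
  | ⟨0, _⟩ => ![![0, (-1), 0, 0, 0], ![1, 0, 0, 0, 0], ![0, 0, 0, 0, 0], ![0, 0, 0, 0, 0], ![0, 0, 0, 0, 0]]
  | ⟨1, _⟩ => ![![0, 0, (-1), 0, 0], ![0, 0, 0, 0, 0], ![1, 0, 0, 0, 0], ![0, 0, 0, 0, 0], ![0, 0, 0, 0, 0]]
  | ⟨2, _⟩ => ![![0, 0, 0, 0, 0], ![0, 0, (-1), 0, 0], ![0, 1, 0, 0, 0], ![0, 0, 0, 0, 0], ![0, 0, 0, 0, 0]]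
  | ⟨3, _⟩ => ![![0, 0, 0, (-1), 0], ![0, 0, 0, 0, 0], ![0, 0, 0, 0, 0], ![1, 0, 0, 0, 0], ![0, 0, 0, 0, 0]]
  | ⟨4, _⟩ => ![![0, 0, 0, 0, (-1)], ![0, 0, 0, (-1), 0], ![0, 0, 0, 0, 0], ![0, 1, 0, 0, 0], ![1, 0, 0, 0, 0]]
  | ⟨5, _⟩ => ![![0, 0, 0, 0, 0], ![0, 0, 0, 0, (-1)], ![0, 0, 0, 0, 0], ![0, 0, 0, 0, 0], ![0, 1, 0, 0, 0]]
  | ⟨n+6, h⟩ => absurd h (by omega)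

noncomputable def gg (x : Basis (Fin 5) ℂ L) : Fin 10 → (L → L → ℂ) := fun k => gf x (Mg k)
noncomputable def hh (x : Basis (Fin 5) ℂ L) : Fin 6 → (L → L → ℂ) := fun k => gf x (Mh k)

lemma mem_ker_leibniz (ψ : L → L → ℂ)
    (h : ∀ X Y Z : L, -ψ ⁅X, Y⁆ Z + ψ X ⁅Y, Z⁆ + ψ ⁅X, Z⁆ Y = 0) :
    ψ ∈ LinearMap.ker (leibnizDC L) :=
  LinearMap.mem_ker.mpr (funext fun X => funext fun Y => funext fun Z => h X Y Z)

lemma ker_leibniz_apply (ψ : L → L → ℂ) (h : ψ ∈ LinearMap.ker (leibnizDC L)) :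
    ∀ X Y Z : L, -ψ ⁅X, Y⁆ Z + ψ X ⁅Y, Z⁆ + ψ ⁅X, Z⁆ Y = 0 := fun X Y Z => by
  have := LinearMap.mem_ker.mp h
  calc -ψ ⁅X, Y⁆ Z + ψ X ⁅Y, Z⁆ + ψ ⁅X, Z⁆ Y = leibnizDC L ψ X Y Z := rfl
  _ = 0 := by rw [this]; rfl

set_option maxHeartbeats 4000000 in
lemma gg_mem {x : Basis (Fin 5) ℂ L} (hbr : HBR x) (k : Fin 10) : gg x k ∈ ZL2C L := by
  refine ⟨gf_mem_BilC x _, mem_ker_leibniz _ fun X Y Z => ?_⟩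
  fin_cases k <;>
  · simp only [gg, gf, Fin.sum_univ_five, Mg, Matrix.cons_val_zero, Matrix.cons_val_one,
      Matrix.head_cons, Matrix.cons_val_two, Matrix.tail_cons, Matrix.cons_val_three,
      Matrix.cons_val_four, cons_val_five, cons_val_six, cons_val_seven, cons_val_eight,
      cons_val_nine, Matrix.head_fin_const, coord_lie_0 hbr, coord_lie_1 hbr,
      coord_lie_2 hbr, coord_lie_3 hbr, coord_lie_4 hbr, zero_mul, mul_zero, one_mul,
      neg_mul, add_zero, zero_add, neg_zero]
    try ring

set_option maxHeartbeats 4000000 in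
lemma hh_mem {x : Basis (Fin 5) ℂ L} (hbr : HBR x) (k : Fin 6) : hh x k ∈ Z2C L := by
  constructor
  · refine ⟨gf_mem_BilC x _, mem_ker_leibniz _ fun X Y Z => ?_⟩
    fin_cases k <;>
    · simp only [hh, gf, Fin.sum_univ_five, Mh, Matrix.cons_val_zero, Matrix.cons_val_one,
        Matrix.head_cons, Matrix.cons_val_two, Matrix.tail_cons, Matrix.cons_val_three,
        Matrix.cons_val_four, coord_lie_0 hbr, coord_lie_1 hbr,
        coord_lie_2 hbr, coord_lie_3 hbr, coord_lie_4 hbr, zero_mul, mul_zero, one_mul,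
        neg_mul, add_zero, zero_add, neg_zero]
      try ring
  · intro X Y
    fin_cases k <;>
    · simp only [hh, gf, Fin.sum_univ_five, Mh, Matrix.cons_val_zero, Matrix.cons_val_one,
        Matrix.head_cons, Matrix.cons_val_two, Matrix.tail_cons, Matrix.cons_val_three,
        Matrix.cons_val_four, zero_mul, mul_zero, one_mul, neg_mul, add_zero, zero_add,
        neg_zero]
      try ring

noncomputable def evalAt (x : Basis (Fin 5) ℂ L) {n : ℕ} (p : Fin n → Fin 5 × Fin 5) :
    (L → L → ℂ) →ₗ[ℂ] (Fin n → ℂ) where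
  toFun ψ := fun k => ψ (x (p k).1) (x (p k).2)
  map_add' _ _ := rfl
  map_smul' _ _ := rfl

def pos10 : Fin 10 → Fin 5 × Fin 5 :=
  ![(0,0),(0,1),(1,0),(1,1),(2,0),(2,1),(3,0),(3,1),(4,0),(4,1)]
def pos6 : Fin 6 → Fin 5 × Fin 5 := ![(1,0),(2,0),(2,1),(3,0),(4,0),(4,1)]

set_option maxHeartbeats 4000000 in
lemma indep_gg (x : Basis (Fin 5) ℂ L) : LinearIndependent ℂ (gg x) := by
  have key : (evalAt x pos10) ∘ gg x = ⇑(Pi.basisFun ℂ (Fin 10)) := by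
    funext k i
    fin_cases k <;> fin_cases i <;>
      simp [evalAt, gg, gf_basis, Mg, pos10, Pi.basisFun_apply, LinearMap.single_apply,
        Pi.single_apply, Matrix.vecHead, Matrix.vecTail]
  exact LinearIndependent.of_comp (evalAt x pos10)
    (key ▸ (Pi.basisFun ℂ (Fin 10)).linearIndependent)

set_option maxHeartbeats 4000000 in
lemma indep_hh (x : Basis (Fin 5) ℂ L) : LinearIndependent ℂ (hh x) := by
  have key : (evalAt x pos6) ∘ hh x = ⇑(Pi.basisFun ℂ (Fin 6)) := by
    funext k i
    fin_cases k <;> fin_cases i <;>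
      simp [evalAt, hh, gf_basis, Mh, pos6, Pi.basisFun_apply, LinearMap.single_apply,
        Pi.single_apply, Matrix.vecHead, Matrix.vecTail]
  exact LinearIndependent.of_comp (evalAt x pos6)
    (key ▸ (Pi.basisFun ℂ (Fin 6)).linearIndependent)
set_option maxHeartbeats 4000000 in
lemma ZL2C_le_span {x : Basis (Fin 5) ℂ L} (hbr : HBR x) :
    ZL2C L ≤ Submodule.span ℂ (Set.range (gg x)) := by
  have hbr' := hbr; unfold HBR at hbr'
  rintro ψ ⟨⟨Ψ, hΨ⟩, hker⟩
  have hd : ∀ X Y Z : L, -Ψ ⁅X, Y⁆ Z + Ψ X ⁅Y, Z⁆ + Ψ ⁅X, Z⁆ Y = 0 := by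
    intro X Y Z
    have h0 := ker_leibniz_apply ψ hker X Y Z
    simpa only [hΨ] using h0
  have h02 : Ψ (x 0) (x 2) = -Ψ (x 2) (x 0) := by
    have e := hd (x 0) (x 0) (x 1)
    simp only [hbr', Fin.reduceEq, and_true, true_and, and_false, false_and, and_self, if_true, if_false, ite_true, ite_false, map_zero, LinearMap.zero_apply, map_neg, LinearMap.neg_apply, neg_zero, zero_add, add_zero, neg_neg] at e
    linear_combination e
  have h03 : Ψ (x 0) (x 3) = -Ψ (x 3) (x 0) := by
    have e := hd (x 0) (x 0) (x 2)
    simp only [hbr', Fin.reduceEq, and_true, true_and, and_false, false_and, and_self, if_true, if_false, ite_true, ite_false, map_zero, LinearMap.zero_apply, map_neg, LinearMap.neg_apply, neg_zero, zero_add, add_zero, neg_neg] at e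
    linear_combination e
  have h12 : Ψ (x 1) (x 2) = -Ψ (x 2) (x 1) := by
    have e := hd (x 1) (x 1) (x 0)
    simp only [hbr', Fin.reduceEq, and_true, true_and, and_false, false_and, and_self, if_true, if_false, ite_true, ite_false, map_zero, LinearMap.zero_apply, map_neg, LinearMap.neg_apply, neg_zero, zero_add, add_zero, neg_neg] at e
    linear_combination -e
  have h14 : Ψ (x 1) (x 4) = -Ψ (x 4) (x 1) := by
    have e := hd (x 1) (x 1) (x 2)
    simp only [hbr', Fin.reduceEq, and_true, true_and, and_false, false_and, and_self, if_true, if_false, ite_true, ite_false, map_zero, LinearMap.zero_apply, map_neg, LinearMap.neg_apply, neg_zero, zero_add, add_zero, neg_neg] at e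
    linear_combination e
  have h22 : Ψ (x 2) (x 2) = Ψ (x 4) (x 0) - Ψ (x 3) (x 1) := by
    have e := hd (x 2) (x 0) (x 1)
    simp only [hbr', Fin.reduceEq, and_true, true_and, and_false, false_and, and_self, if_true, if_false, ite_true, ite_false, map_zero, LinearMap.zero_apply, map_neg, LinearMap.neg_apply, neg_zero, zero_add, add_zero, neg_neg] at e
    linear_combination e
  have h04 : Ψ (x 0) (x 4) = Ψ (x 4) (x 0) - 2 * Ψ (x 3) (x 1) := by
    have e := hd (x 0) (x 1) (x 2)
    simp only [hbr', Fin.reduceEq, and_true, true_and, and_false, false_and, and_self, if_true, if_false, ite_true, ite_false, map_zero, LinearMap.zero_apply, map_neg, LinearMap.neg_apply, neg_zero, zero_add, add_zero, neg_neg] at e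
    linear_combination e + h22
  have h13 : Ψ (x 1) (x 3) = Ψ (x 3) (x 1) - 2 * Ψ (x 4) (x 0) := by
    have e := hd (x 1) (x 0) (x 2)
    simp only [hbr', Fin.reduceEq, and_true, true_and, and_false, false_and, and_self, if_true, if_false, ite_true, ite_false, map_zero, LinearMap.zero_apply, map_neg, LinearMap.neg_apply, neg_zero, zero_add, add_zero, neg_neg] at e
    linear_combination e - h22
  have h23 : Ψ (x 2) (x 3) = 0 := by
    have e := hd (x 0) (x 1) (x 3)
    simp only [hbr', Fin.reduceEq, and_true, true_and, and_false, false_and, and_self, if_true, if_false, ite_true, ite_false, map_zero, LinearMap.zero_apply, map_neg, LinearMap.neg_apply, neg_zero, zero_add, add_zero, neg_neg] at e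
    linear_combination -e
  have h24 : Ψ (x 2) (x 4) = 0 := by
    have e := hd (x 0) (x 1) (x 4)
    simp only [hbr', Fin.reduceEq, and_true, true_and, and_false, false_and, and_self, if_true, if_false, ite_true, ite_false, map_zero, LinearMap.zero_apply, map_neg, LinearMap.neg_apply, neg_zero, zero_add, add_zero, neg_neg] at e
    linear_combination -e
  have h33 : Ψ (x 3) (x 3) = 0 := by
    have e := hd (x 0) (x 2) (x 3)
    simp only [hbr', Fin.reduceEq, and_true, true_and, and_false, false_and, and_self, if_true, if_false, ite_true, ite_false, map_zero, LinearMap.zero_apply, map_neg, LinearMap.neg_apply, neg_zero, zero_add, add_zero, neg_neg] at e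
    linear_combination -e
  have h34 : Ψ (x 3) (x 4) = 0 := by
    have e := hd (x 0) (x 2) (x 4)
    simp only [hbr', Fin.reduceEq, and_true, true_and, and_false, false_and, and_self, if_true, if_false, ite_true, ite_false, map_zero, LinearMap.zero_apply, map_neg, LinearMap.neg_apply, neg_zero, zero_add, add_zero, neg_neg] at e
    linear_combination -e
  have h43 : Ψ (x 4) (x 3) = 0 := by
    have e := hd (x 1) (x 2) (x 3)
    simp only [hbr', Fin.reduceEq, and_true, true_and, and_false, false_and, and_self, if_true, if_false, ite_true, ite_false, map_zero, LinearMap.zero_apply, map_neg, LinearMap.neg_apply, neg_zero, zero_add, add_zero, neg_neg] at e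
    linear_combination -e
  have h44 : Ψ (x 4) (x 4) = 0 := by
    have e := hd (x 1) (x 2) (x 4)
    simp only [hbr', Fin.reduceEq, and_true, true_and, and_false, false_and, and_self, if_true, if_false, ite_true, ite_false, map_zero, LinearMap.zero_apply, map_neg, LinearMap.neg_apply, neg_zero, zero_add, add_zero, neg_neg] at e
    linear_combination -e
  have h32 : Ψ (x 3) (x 2) = 0 := by
    have e := hd (x 3) (x 0) (x 1)
    simp only [hbr', Fin.reduceEq, and_true, true_and, and_false, false_and, and_self, if_true, if_false, ite_true, ite_false, map_zero, LinearMap.zero_apply, map_neg, LinearMap.neg_apply, neg_zero, zero_add, add_zero, neg_neg] at e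
    linear_combination e
  have h42 : Ψ (x 4) (x 2) = 0 := by
    have e := hd (x 4) (x 0) (x 1)
    simp only [hbr', Fin.reduceEq, and_true, true_and, and_false, false_and, and_self, if_true, if_false, ite_true, ite_false, map_zero, LinearMap.zero_apply, map_neg, LinearMap.neg_apply, neg_zero, zero_add, add_zero, neg_neg] at e
    linear_combination e
  have hcomb : ψ = (Ψ (x 0) (x 0)) • gg x 0 + (Ψ (x 0) (x 1)) • gg x 1 + (Ψ (x 1) (x 0)) • gg x 2 + (Ψ (x 1) (x 1)) • gg x 3 + (Ψ (x 2) (x 0)) • gg x 4 + (Ψ (x 2) (x 1)) • gg x 5 + (Ψ (x 3) (x 0)) • gg x 6 + (Ψ (x 3) (x 1)) • gg x 7 + (Ψ (x 4) (x 0)) • gg x 8 + (Ψ (x 4) (x 1)) • gg x 9 := by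
    funext X Y
    rw [hΨ X Y, bil_expand x Ψ X Y]
    simp only [Fin.sum_univ_five, Pi.add_apply, Pi.smul_apply, smul_eq_mul, gg, gf,
      Mg, Matrix.cons_val_zero, Matrix.cons_val_one, Matrix.head_cons,
      Matrix.cons_val_two, Matrix.tail_cons, Matrix.cons_val_three,
      Matrix.cons_val_four, zero_mul, mul_zero, one_mul, neg_mul, add_zero,
      zero_add, neg_zero]
    linear_combination h02 * (x.coord 0 X * x.coord 2 Y) + h03 * (x.coord 0 X * x.coord 3 Y) + h04 * (x.coord 0 X * x.coord 4 Y) + h12 * (x.coord 1 X * x.coord 2 Y) + h13 * (x.coord 1 X * x.coord 3 Y) + h14 * (x.coord 1 X * x.coord 4 Y) + h22 * (x.coord 2 X * x.coord 2 Y) + h23 * (x.coord 2 X * x.coord 3 Y) + h24 * (x.coord 2 X * x.coord 4 Y) + h32 * (x.coord 3 X * x.coord 2 Y) + h33 * (x.coord 3 X * x.coord 3 Y) + h34 * (x.coord 3 X * x.coord 4 Y) + h42 * (x.coord 4 X * x.coord 2 Y) + h43 * (x.coord 4 X * x.coord 3 Y) + h44 * (x.coord 4 X * x.coord 4 Y)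
  rw [hcomb]
  refine Submodule.add_mem _ (Submodule.add_mem _ (Submodule.add_mem _ (Submodule.add_mem _ (Submodule.add_mem _ (Submodule.add_mem _ (Submodule.add_mem _ (Submodule.add_mem _ (Submodule.add_mem _ ?_ ?_) ?_) ?_) ?_) ?_) ?_) ?_) ?_) ?_ <;>
    exact Submodule.smul_mem _ _ (Submodule.subset_span ⟨_, rfl⟩)
set_option maxHeartbeats 4000000 in
lemma Z2C_le_span {x : Basis (Fin 5) ℂ L} (hbr : HBR x) :
    Z2C L ≤ Submodule.span ℂ (Set.range (hh x)) := by
  have hbr' := hbr; unfold HBR at hbr'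
  rintro ψ ⟨⟨⟨Ψ, hΨ⟩, hker⟩, halt⟩
  have hd : ∀ X Y Z : L, -Ψ ⁅X, Y⁆ Z + Ψ X ⁅Y, Z⁆ + Ψ ⁅X, Z⁆ Y = 0 := by
    intro X Y Z
    have h0 := ker_leibniz_apply ψ hker X Y Z
    simpa only [hΨ] using h0
  have ha : ∀ X Y : L, Ψ X Y = -Ψ Y X := by
    intro X Y; rw [← hΨ X Y, ← hΨ Y X]; exact halt X Y
  have h22 : Ψ (x 2) (x 2) = Ψ (x 4) (x 0) - Ψ (x 3) (x 1) := by
    have e := hd (x 2) (x 0) (x 1)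
    simp only [hbr', Fin.reduceEq, and_true, true_and, and_false, false_and, and_self, if_true, if_false, ite_true, ite_false, map_zero, LinearMap.zero_apply, map_neg, LinearMap.neg_apply, neg_zero, zero_add, add_zero, neg_neg] at e
    linear_combination e
  have h13 : Ψ (x 1) (x 3) = Ψ (x 3) (x 1) - 2 * Ψ (x 4) (x 0) := by
    have e := hd (x 1) (x 0) (x 2)
    simp only [hbr', Fin.reduceEq, and_true, true_and, and_false, false_and, and_self, if_true, if_false, ite_true, ite_false, map_zero, LinearMap.zero_apply, map_neg, LinearMap.neg_apply, neg_zero, zero_add, add_zero, neg_neg] at e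
    linear_combination e - h22
  have h23 : Ψ (x 2) (x 3) = 0 := by
    have e := hd (x 0) (x 1) (x 3)
    simp only [hbr', Fin.reduceEq, and_true, true_and, and_false, false_and, and_self, if_true, if_false, ite_true, ite_false, map_zero, LinearMap.zero_apply, map_neg, LinearMap.neg_apply, neg_zero, zero_add, add_zero, neg_neg] at e
    linear_combination -e
  have h24 : Ψ (x 2) (x 4) = 0 := by
    have e := hd (x 0) (x 1) (x 4)
    simp only [hbr', Fin.reduceEq, and_true, true_and, and_false, false_and, and_self, if_true, if_false, ite_true, ite_false, map_zero, LinearMap.zero_apply, map_neg, LinearMap.neg_apply, neg_zero, zero_add, add_zero, neg_neg] at e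
    linear_combination -e
  have h33 : Ψ (x 3) (x 3) = 0 := by
    have e := hd (x 0) (x 2) (x 3)
    simp only [hbr', Fin.reduceEq, and_true, true_and, and_false, false_and, and_self, if_true, if_false, ite_true, ite_false, map_zero, LinearMap.zero_apply, map_neg, LinearMap.neg_apply, neg_zero, zero_add, add_zero, neg_neg] at e
    linear_combination -e
  have h34 : Ψ (x 3) (x 4) = 0 := by
    have e := hd (x 0) (x 2) (x 4)
    simp only [hbr', Fin.reduceEq, and_true, true_and, and_false, false_and, and_self, if_true, if_false, ite_true, ite_false, map_zero, LinearMap.zero_apply, map_neg, LinearMap.neg_apply, neg_zero, zero_add, add_zero, neg_neg] at e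
    linear_combination -e
  have h43 : Ψ (x 4) (x 3) = 0 := by
    have e := hd (x 1) (x 2) (x 3)
    simp only [hbr', Fin.reduceEq, and_true, true_and, and_false, false_and, and_self, if_true, if_false, ite_true, ite_false, map_zero, LinearMap.zero_apply, map_neg, LinearMap.neg_apply, neg_zero, zero_add, add_zero, neg_neg] at e
    linear_combination -e
  have h44 : Ψ (x 4) (x 4) = 0 := by
    have e := hd (x 1) (x 2) (x 4)
    simp only [hbr', Fin.reduceEq, and_true, true_and, and_false, false_and, and_self, if_true, if_false, ite_true, ite_false, map_zero, LinearMap.zero_apply, map_neg, LinearMap.neg_apply, neg_zero, zero_add, add_zero, neg_neg] at e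
    linear_combination -e
  have h32 : Ψ (x 3) (x 2) = 0 := by
    have e := hd (x 3) (x 0) (x 1)
    simp only [hbr', Fin.reduceEq, and_true, true_and, and_false, false_and, and_self, if_true, if_false, ite_true, ite_false, map_zero, LinearMap.zero_apply, map_neg, LinearMap.neg_apply, neg_zero, zero_add, add_zero, neg_neg] at e
    linear_combination e
  have h42 : Ψ (x 4) (x 2) = 0 := by
    have e := hd (x 4) (x 0) (x 1)
    simp only [hbr', Fin.reduceEq, and_true, true_and, and_false, false_and, and_self, if_true, if_false, ite_true, ite_false, map_zero, LinearMap.zero_apply, map_neg, LinearMap.neg_apply, neg_zero, zero_add, add_zero, neg_neg] at e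
    linear_combination e
  have k31 : Ψ (x 3) (x 1) = Ψ (x 4) (x 0) := by
    linear_combination (ha (x 1) (x 3) - h13) / 2
  have h00 : Ψ (x 0) (x 0) = 0 := by linear_combination (ha (x 0) (x 0)) / 2
  have h11 : Ψ (x 1) (x 1) = 0 := by linear_combination (ha (x 1) (x 1)) / 2
  have h22z : Ψ (x 2) (x 2) = 0 := by linear_combination h22 - k31
  have h01 : Ψ (x 0) (x 1) = -Ψ (x 1) (x 0) := by linear_combination ha (x 0) (x 1)
  have h02 : Ψ (x 0) (x 2) = -Ψ (x 2) (x 0) := by linear_combination ha (x 0) (x 2)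
  have h03 : Ψ (x 0) (x 3) = -Ψ (x 3) (x 0) := by linear_combination ha (x 0) (x 3)
  have h04 : Ψ (x 0) (x 4) = -Ψ (x 4) (x 0) := by linear_combination ha (x 0) (x 4)
  have h12 : Ψ (x 1) (x 2) = -Ψ (x 2) (x 1) := by linear_combination ha (x 1) (x 2)
  have h13z : Ψ (x 1) (x 3) = -Ψ (x 4) (x 0) := by linear_combination ha (x 1) (x 3) - k31
  have h14 : Ψ (x 1) (x 4) = -Ψ (x 4) (x 1) := by linear_combination ha (x 1) (x 4)
  have hcomb : ψ = (Ψ (x 1) (x 0)) • hh x 0 + (Ψ (x 2) (x 0)) • hh x 1 + (Ψ (x 2) (x 1)) • hh x 2 + (Ψ (x 3) (x 0)) • hh x 3 + (Ψ (x 4) (x 0)) • hh x 4 + (Ψ (x 4) (x 1)) • hh x 5 := by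
    funext X Y
    rw [hΨ X Y, bil_expand x Ψ X Y]
    simp only [Fin.sum_univ_five, Pi.add_apply, Pi.smul_apply, smul_eq_mul, hh, gf,
      Mh, Matrix.cons_val_zero, Matrix.cons_val_one, Matrix.head_cons,
      Matrix.cons_val_two, Matrix.tail_cons, Matrix.cons_val_three,
      Matrix.cons_val_four, zero_mul, mul_zero, one_mul, neg_mul, add_zero,
      zero_add, neg_zero]
    linear_combination h00 * (x.coord 0 X * x.coord 0 Y) + h01 * (x.coord 0 X * x.coord 1 Y) + h02 * (x.coord 0 X * x.coord 2 Y) + h03 * (x.coord 0 X * x.coord 3 Y) + h04 * (x.coord 0 X * x.coord 4 Y) + h11 * (x.coord 1 X * x.coord 1 Y) + h12 * (x.coord 1 X * x.coord 2 Y) + h13z * (x.coord 1 X * x.coord 3 Y) + h14 * (x.coord 1 X * x.coord 4 Y) + h22z * (x.coord 2 X * x.coord 2 Y) + h23 * (x.coord 2 X * x.coord 3 Y) + h24 * (x.coord 2 X * x.coord 4 Y) + k31 * (x.coord 3 X * x.coord 1 Y) + h32 * (x.coord 3 X * x.coord 2 Y) + h33 * (x.coord 3 X * x.coord 3 Y)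 + h34 * (x.coord 3 X * x.coord 4 Y) + h42 * (x.coord 4 X * x.coord 2 Y) + h43 * (x.coord 4 X * x.coord 3 Y) + h44 * (x.coord 4 X * x.coord 4 Y)
  rw [hcomb]
  refine Submodule.add_mem _ (Submodule.add_mem _ (Submodule.add_mem _ (Submodule.add_mem _ (Submodule.add_mem _ ?_ ?_) ?_) ?_) ?_) ?_ <;>
    exact Submodule.smul_mem _ _ (Submodule.subset_span ⟨_, rfl⟩)

noncomputable def bb (x : Basis (Fin 5) ℂ L) : Fin 3 → (L → L → ℂ) :=
  fun k => hh x (Fin.castLE (by norm_num) k)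

set_option maxHeartbeats 1000000 in
lemma B2C_le_span {x : Basis (Fin 5) ℂ L} (hbr : HBR x) :
    B2C L ≤ Submodule.span ℂ (Set.range (bb x)) := by
  rintro ψ ⟨f, hf⟩
  have hcomb : ψ = f (x 2) • bb x 0 + f (x 3) • bb x 1 + f (x 4) • bb x 2 := by
    funext X Y
    rw [hf X Y, lie_eq hbr X Y]
    simp only [map_add, map_smul, smul_eq_mul, Pi.add_apply, Pi.smul_apply, bb, hh, gf,
      Fin.sum_univ_five, Mh, Fin.castLE, Matrix.cons_val_zero, Matrix.cons_val_one,
      Matrix.head_cons, Matrix.cons_val_two, Matrix.tail_cons, Matrix.cons_val_three,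
      Matrix.cons_val_four, zero_mul, mul_zero, one_mul, neg_mul, add_zero, zero_add,
      neg_zero]
    ring
  rw [hcomb]
  refine Submodule.add_mem _ (Submodule.add_mem _ ?_ ?_) ?_ <;>
    exact Submodule.smul_mem _ _ (Submodule.subset_span ⟨_, rfl⟩)

set_option maxHeartbeats 1000000 in
lemma span_bb_le_B2C {x : Basis (Fin 5) ℂ L} (hbr : HBR x) :
    Submodule.span ℂ (Set.range (bb x)) ≤ B2C L := by
  rw [Submodule.span_le]
  rintro _ ⟨k, rfl⟩
  fin_cases k
  · refine ⟨x.coord 2, fun X Y => ?_⟩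
    rw [coord_lie_2 hbr]
    simp only [bb, hh, gf, Fin.sum_univ_five, Mh, Fin.castLE, Matrix.cons_val_zero,
      Matrix.cons_val_one, Matrix.head_cons, Matrix.cons_val_two, Matrix.tail_cons,
      Matrix.cons_val_three, Matrix.cons_val_four, zero_mul, mul_zero, one_mul, neg_mul,
      add_zero, zero_add, neg_zero]
    ring
  · refine ⟨x.coord 3, fun X Y => ?_⟩
    rw [coord_lie_3 hbr]
    simp only [bb, hh, gf, Fin.sum_univ_five, Mh, Fin.castLE, Matrix.cons_val_zero,
      Matrix.cons_val_one, Matrix.head_cons, Matrix.cons_val_two, Matrix.tail_cons,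
      Matrix.cons_val_three, Matrix.cons_val_four, zero_mul, mul_zero, one_mul, neg_mul,
      add_zero, zero_add, neg_zero]
    ring
  · refine ⟨x.coord 4, fun X Y => ?_⟩
    rw [coord_lie_4 hbr]
    simp only [bb, hh, gf, Fin.sum_univ_five, Mh, Fin.castLE, Matrix.cons_val_zero,
      Matrix.cons_val_one, Matrix.head_cons, Matrix.cons_val_two, Matrix.tail_cons,
      Matrix.cons_val_three, Matrix.cons_val_four, zero_mul, mul_zero, one_mul, neg_mul,
      add_zero, zero_add, neg_zero]
    ring

lemma span_gg_eq {x : Basis (Fin 5) ℂ L} (hbr : HBR x) :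
    ZL2C L = Submodule.span ℂ (Set.range (gg x)) :=
  le_antisymm (ZL2C_le_span hbr)
    (Submodule.span_le.mpr (by rintro _ ⟨k, rfl⟩; exact gg_mem hbr k))

lemma span_hh_eq {x : Basis (Fin 5) ℂ L} (hbr : HBR x) :
    Z2C L = Submodule.span ℂ (Set.range (hh x)) :=
  le_antisymm (Z2C_le_span hbr)
    (Submodule.span_le.mpr (by rintro _ ⟨k, rfl⟩; exact hh_mem hbr k))

lemma span_bb_eq {x : Basis (Fin 5) ℂ L} (hbr : HBR x) :
    B2C L = Submodule.span ℂ (Set.range (bb x)) :=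
  le_antisymm (B2C_le_span hbr) (span_bb_le_B2C hbr)

lemma fr_ZL2 {x : Basis (Fin 5) ℂ L} (hbr : HBR x) : finrank ℂ (ZL2C L) = 10 := by
  rw [span_gg_eq hbr, finrank_span_eq_card (indep_gg x)]
  simp

lemma fr_Z2 {x : Basis (Fin 5) ℂ L} (hbr : HBR x) : finrank ℂ (Z2C L) = 6 := by
  rw [span_hh_eq hbr, finrank_span_eq_card (indep_hh x)]
  simp

lemma indep_bb (x : Basis (Fin 5) ℂ L) : LinearIndependent ℂ (bb x) :=
  (indep_hh x).comp _ (Fin.castLE_injective _)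

lemma fr_B2 {x : Basis (Fin 5) ℂ L} (hbr : HBR x) : finrank ℂ (B2C L) = 3 := by
  rw [span_bb_eq hbr, finrank_span_eq_card (indep_bb x)]
  simp

lemma B2C_le_Z2C {x : Basis (Fin 5) ℂ L} (hbr : HBR x) : B2C L ≤ Z2C L := by
  rw [span_bb_eq hbr, span_hh_eq hbr]
  refine Submodule.span_mono ?_
  rintro _ ⟨k, rfl⟩
  exact ⟨Fin.castLE (by norm_num) k, rfl⟩

lemma Z2C_le_ZL2C : Z2C L ≤ ZL2C L := inf_le_left

lemma fd_ZL2 {x : Basis (Fin 5) ℂ L} (hbr : HBR x) : FiniteDimensional ℂ (ZL2C L) := by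
  rw [span_gg_eq hbr]
  exact FiniteDimensional.span_of_finite ℂ (Set.finite_range _)

lemma fd_Z2 {x : Basis (Fin 5) ℂ L} (hbr : HBR x) : FiniteDimensional ℂ (Z2C L) := by
  rw [span_hh_eq hbr]
  exact FiniteDimensional.span_of_finite ℂ (Set.finite_range _)

noncomputable def Mw : Fin 5 → Fin 5 → ℂ :=
  ![![0,0,0,0,1],![0,0,0,0,0],![0,0,0,0,0],![0,0,0,0,0],![(-1),0,0,0,0]]
noncomputable def MB : Fin 5 → Fin 5 → ℂ :=
  ![![0,0,0,0,1],![0,0,0,(-1),0],![0,0,1,0,0],![0,(-1),0,0,0],![1,0,0,0,0]]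


variable (L)

set_option maxHeartbeats 4000000 in
set_option synthInstance.maxHeartbeats 400000 in
/-- For the 5-dimensional nilpotent Lie algebra `g₅,₄` (basis
`x₁,…,x₅`, nonzero brackets `[x₁,x₂] = x₃`, `[x₁,x₃] = x₄`, `[x₂,x₃] = x₅`, written
0-indexed below): `dim H²(g,ℂ) = 3`, `dim ZL²(g,ℂ) = 10`, `dim HL²(g,ℂ) = 7`, and `g` is
not trivial `ZL²`-uncoupling: the invariant symmetric form
`B = ω¹⊙ω⁵ − ω²⊙ω⁴ + ω³⊗ω³` has `I_B ≠ 0` a 3-coboundary, so `Im I ∩ B³(g,ℂ) ≠ {0}`. -/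
theorem stmt19 [FiniteDimensional ℂ L] (x : Basis (Fin 5) ℂ L)
    (hbr : ∀ i j : Fin 5, ⁅x i, x j⁆ =
      if i = 0 ∧ j = 1 then x 2 else if i = 1 ∧ j = 0 then -x 2
      else if i = 0 ∧ j = 2 then x 3 else if i = 2 ∧ j = 0 then -x 3
      else if i = 1 ∧ j = 2 then x 4 else if i = 2 ∧ j = 1 then -x 4
      else 0) :
    Module.finrank ℂ (↥(Z2C L) ⧸ Submodule.comap (Z2C L).subtype (B2C L)) = 3 ∧
    Module.finrank ℂ ↥(ZL2C L) = 10 ∧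
    Module.finrank ℂ (↥(ZL2C L) ⧸ Submodule.comap (ZL2C L).subtype (B2C L)) = 7 ∧
    (∀ X Y : L,
      (x.coord 0 X * x.coord 4 Y + x.coord 4 X * x.coord 0 Y
        - x.coord 1 X * x.coord 3 Y - x.coord 3 X * x.coord 1 Y
        + x.coord 2 X * x.coord 2 Y)
      = (x.coord 0 Y * x.coord 4 X + x.coord 4 Y * x.coord 0 X
        - x.coord 1 Y * x.coord 3 X - x.coord 3 Y * x.coord 1 X
        + x.coord 2 Y * x.coord 2 X)) ∧
    (∀ X Y Z : L,
      (x.coord 0 ⁅Z, X⁆ * x.coord 4 Y + x.coord 4 ⁅Z, X⁆ * x.coord 0 Y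
        - x.coord 1 ⁅Z, X⁆ * x.coord 3 Y - x.coord 3 ⁅Z, X⁆ * x.coord 1 Y
        + x.coord 2 ⁅Z, X⁆ * x.coord 2 Y)
      = -(x.coord 0 X * x.coord 4 ⁅Z, Y⁆ + x.coord 4 X * x.coord 0 ⁅Z, Y⁆
        - x.coord 1 X * x.coord 3 ⁅Z, Y⁆ - x.coord 3 X * x.coord 1 ⁅Z, Y⁆
        + x.coord 2 X * x.coord 2 ⁅Z, Y⁆)) ∧
    (fun X Y Z : L =>
      x.coord 0 ⁅X, Y⁆ * x.coord 4 Z + x.coord 4 ⁅X, Y⁆ * x.coord 0 Z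
        - x.coord 1 ⁅X, Y⁆ * x.coord 3 Z - x.coord 3 ⁅X, Y⁆ * x.coord 1 Z
        + x.coord 2 ⁅X, Y⁆ * x.coord 2 Z) ≠ 0 ∧
    (fun X Y Z : L =>
      x.coord 0 ⁅X, Y⁆ * x.coord 4 Z + x.coord 4 ⁅X, Y⁆ * x.coord 0 Z
        - x.coord 1 ⁅X, Y⁆ * x.coord 3 Z - x.coord 3 ⁅X, Y⁆ * x.coord 1 Z
        + x.coord 2 ⁅X, Y⁆ * x.coord 2 Z) ∈ B3C L ∧
    ImIC L ⊓ B3C L ≠ ⊥ := by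
  have hbr' : HBR x := hbr
  haveI hfdZ2 : FiniteDimensional ℂ (Z2C L) := fd_Z2 hbr'
  haveI hfdZL2 : FiniteDimensional ℂ (ZL2C L) := fd_ZL2 hbr'
  have hB2Z2 : B2C L ≤ Z2C L := B2C_le_Z2C hbr'
  have hB2ZL2 : B2C L ≤ ZL2C L := le_trans hB2Z2 Z2C_le_ZL2C
  -- dim H² = 3
  have item1 : Module.finrank ℂ (↥(Z2C L) ⧸ Submodule.comap (Z2C L).subtype (B2C L)) = 3 := by
    have h1 : finrank ℂ (Submodule.comap (Z2C L).subtype (B2C L)) = 3 := by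
      rw [(Submodule.comapSubtypeEquivOfLe hB2Z2).finrank_eq, fr_B2 hbr']
    have h2 := Submodule.finrank_quotient_add_finrank (Submodule.comap (Z2C L).subtype (B2C L))
    rw [fr_Z2 hbr', h1] at h2
    omega
  have item3 : Module.finrank ℂ (↥(ZL2C L) ⧸ Submodule.comap (ZL2C L).subtype (B2C L)) = 7 := by
    have h1 : finrank ℂ (Submodule.comap (ZL2C L).subtype (B2C L)) = 3 := by
      rw [(Submodule.comapSubtypeEquivOfLe hB2ZL2).finrank_eq, fr_B2 hbr']
    have h2 := Submodule.finrank_quotient_add_finrank (Submodule.comap (ZL2C L).subtype (B2C L))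
    rw [fr_ZL2 hbr', h1] at h2
    omega
  have item6 : (fun X Y Z : L =>
      x.coord 0 ⁅X, Y⁆ * x.coord 4 Z + x.coord 4 ⁅X, Y⁆ * x.coord 0 Z
        - x.coord 1 ⁅X, Y⁆ * x.coord 3 Z - x.coord 3 ⁅X, Y⁆ * x.coord 1 Z
        + x.coord 2 ⁅X, Y⁆ * x.coord 2 Z) ≠ 0 := by
    intro h0
    have h1 := congrFun (congrFun (congrFun h0 (x 0)) (x 1)) (x 2)
    have hb : ⁅x 0, x 1⁆ = x 2 := by have := hbr 0 1; norm_num at this; exact this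
    rw [hb] at h1
    simp only [Basis.coord_apply, Basis.repr_self, Finsupp.single_apply, Fin.reduceEq,
      if_true, if_false, ite_true, ite_false, Pi.zero_apply] at h1
    norm_num at h1
  have item7 : (fun X Y Z : L =>
      x.coord 0 ⁅X, Y⁆ * x.coord 4 Z + x.coord 4 ⁅X, Y⁆ * x.coord 0 Z
        - x.coord 1 ⁅X, Y⁆ * x.coord 3 Z - x.coord 3 ⁅X, Y⁆ * x.coord 1 Z
        + x.coord 2 ⁅X, Y⁆ * x.coord 2 Z) ∈ B3C L := by
    refine Submodule.mem_map.mpr ⟨gf x Mw, ⟨gf_mem_BilC x _, fun X Y => ?_⟩, ?_⟩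
    · simp only [gf, Fin.sum_univ_five, Mw, Matrix.cons_val_zero, Matrix.cons_val_one,
        Matrix.head_cons, Matrix.cons_val_two, Matrix.tail_cons, Matrix.cons_val_three,
        Matrix.cons_val_four, zero_mul, mul_zero, one_mul, neg_mul, add_zero, zero_add,
        neg_zero]
      ring
    · funext X Y Z
      show -gf x Mw ⁅X, Y⁆ Z + gf x Mw X ⁅Y, Z⁆ + gf x Mw ⁅X, Z⁆ Y = _
      simp only [gf, Fin.sum_univ_five, Mw, Matrix.cons_val_zero, Matrix.cons_val_one,
        Matrix.head_cons, Matrix.cons_val_two, Matrix.tail_cons, Matrix.cons_val_three,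
        Matrix.cons_val_four, coord_lie_0 hbr', coord_lie_1 hbr', coord_lie_2 hbr',
        coord_lie_3 hbr', coord_lie_4 hbr', zero_mul, mul_zero, one_mul, neg_mul, add_zero,
        zero_add, neg_zero]
      ring
  have item8 : (fun X Y Z : L =>
      x.coord 0 ⁅X, Y⁆ * x.coord 4 Z + x.coord 4 ⁅X, Y⁆ * x.coord 0 Z
        - x.coord 1 ⁅X, Y⁆ * x.coord 3 Z - x.coord 3 ⁅X, Y⁆ * x.coord 1 Z
        + x.coord 2 ⁅X, Y⁆ * x.coord 2 Z) ∈ ImIC L := by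
    refine Submodule.subset_span ⟨gW x MB, fun X Y => ?_, fun X Y Z => ?_, ?_⟩
    · rw [← gf_eq, ← gf_eq]
      simp only [gf, Fin.sum_univ_five, MB, Matrix.cons_val_zero, Matrix.cons_val_one,
        Matrix.head_cons, Matrix.cons_val_two, Matrix.tail_cons, Matrix.cons_val_three,
        Matrix.cons_val_four, zero_mul, mul_zero, one_mul, neg_mul, add_zero, zero_add,
        neg_zero]
      ring
    · rw [← gf_eq, ← gf_eq]
      simp only [gf, Fin.sum_univ_five, MB, Matrix.cons_val_zero, Matrix.cons_val_one,
        Matrix.head_cons, Matrix.cons_val_two, Matrix.tail_cons, Matrix.cons_val_three,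
        Matrix.cons_val_four, coord_lie_0 hbr', coord_lie_1 hbr', coord_lie_2 hbr',
        coord_lie_3 hbr', coord_lie_4 hbr', zero_mul, mul_zero, one_mul, neg_mul, add_zero,
        zero_add, neg_zero]
      ring
    · funext X Y Z
      rw [← gf_eq]
      simp only [gf, Fin.sum_univ_five, MB, Matrix.cons_val_zero, Matrix.cons_val_one,
        Matrix.head_cons, Matrix.cons_val_two, Matrix.tail_cons, Matrix.cons_val_three,
        Matrix.cons_val_four, zero_mul, mul_zero, one_mul, neg_mul, add_zero, zero_add,
        neg_zero]
      ring
  refine ⟨item1, fr_ZL2 hbr', item3, fun X Y => by ring, fun X Y Z => ?_, item6, item7, ?_⟩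
  · simp only [coord_lie_0 hbr', coord_lie_1 hbr', coord_lie_2 hbr', coord_lie_3 hbr',
      coord_lie_4 hbr']
    ring
  · intro hbot
    have hmem : (fun X Y Z : L =>
        x.coord 0 ⁅X, Y⁆ * x.coord 4 Z + x.coord 4 ⁅X, Y⁆ * x.coord 0 Z
          - x.coord 1 ⁅X, Y⁆ * x.coord 3 Z - x.coord 3 ⁅X, Y⁆ * x.coord 1 Z
          + x.coord 2 ⁅X, Y⁆ * x.coord 2 Z) ∈ ImIC L ⊓ B3C L := ⟨item8, item7⟩
    rw [hbot] at hmem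
    exact item6 (Submodule.mem_bot ℂ |>.mp hmem)
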